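/- Convergence of optimal values (Step 2 in the proof of Lemma 3.1): Assume hypotheses (H1)–(H6). Let (αⁿ, y_δⁿ) be a sequence in [α̲,ᾱ] × Ỹ^m converging to (α, y_δ), and for each n let (yⁿ,uⁿ) be a solution of (P_{αⁿ,y_δⁿ}). If (yⁿ,uⁿ) converges weakly in Y × U to some (ȳ,ū) ∈ F_ad, then (ȳ,ū) solves (P_{α,y_δ}) and lim_{n→∞} J_{αⁿ,y_δⁿ}(yⁿ,uⁿ) = min_{(y,u) ∈ F_ad} J_{α,y_δ}(y,u) = J_{α,y_δ}(ȳ,ū) < ∞. -/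

import Mathlib

open Filter Topology ENNReal
open scoped RealInnerProductSpace

/-- Weak convergence of a sequence in a real normed space: convergence tested against
all continuous linear functionals. -/
def WeakConv {X : Type*} [NormedAddCommGroup X] [NormedSpace ℝ X]
    (x : ℕ → X) (x₀ : X) : Prop :=
  ∀ f : X →L[ℝ] ℝ, Tendsto (fun n => f (x n)) atTop (𝓝 (f x₀))

/-- The feasible set `F_ad` of the lower level problem. -/
def Fad {Y U Z : Type*} [Zero Z] (Uad : Set U) (e : Y → U → Z) : Set (Y × U) :=
  {p | p.2 ∈ Uad ∧ e p.1 p.2 = 0}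

/-- The Tikhonov functional `J_{α,yδ}` of the lower level problem, with values in `[0,∞]`. -/
noncomputable def Jfun {Y U Ytil : Type*} [NormedAddCommGroup Y] [NormedSpace ℝ Y]
    [NormedAddCommGroup U] [NormedSpace ℝ U]
    [NormedAddCommGroup Ytil] [InnerProductSpace ℝ Ytil]
    {m r : ℕ} (ιY : Y →L[ℝ] Ytil) (Ψ : Fin r → U → ℝ≥0∞)
    (α : Fin r → ℝ) (yδ : Fin m → Ytil) (p : Y × U) : ℝ≥0∞ :=
  ENNReal.ofReal ((1 / (2 * (m : ℝ))) * ∑ j, ‖ιY p.1 - yδ j‖ ^ 2)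
    + ∑ i, ENNReal.ofReal (α i) * Ψ i p.2

/-- `p = (y,u)` solves the lower level problem `(P_{α,yδ})`. -/
def Solves {Y U Z Ytil : Type*} [NormedAddCommGroup Y] [NormedSpace ℝ Y]
    [NormedAddCommGroup U] [NormedSpace ℝ U]
    [NormedAddCommGroup Ytil] [InnerProductSpace ℝ Ytil] [Zero Z]
    {m r : ℕ} (Uad : Set U) (e : Y → U → Z) (ιY : Y →L[ℝ] Ytil)
    (Ψ : Fin r → U → ℝ≥0∞) (α : Fin r → ℝ) (yδ : Fin m → Ytil)
    (p : Y × U) : Prop :=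
  p ∈ Fad Uad e ∧ ∀ q ∈ Fad Uad e, Jfun ιY Ψ α yδ p ≤ Jfun ιY Ψ α yδ q


section Aux

open Filter Topology ENNReal
open scoped RealInnerProductSpace

lemma myLe_liminf_add (u v : ℕ → ℝ≥0∞) :
    Filter.liminf u atTop + Filter.liminf v atTop
      ≤ Filter.liminf (fun n => u n + v n) atTop := by
  rw [liminf_eq_iSup_iInf_of_nat, liminf_eq_iSup_iInf_of_nat, liminf_eq_iSup_iInf_of_nat]
  have hmu : Monotone (fun n => ⨅ i ≥ n, u i) := fun n m hnm =>
    le_iInf₂ fun i hi => iInf₂_le i (hnm.trans hi)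
  have hmv : Monotone (fun n => ⨅ i ≥ n, v i) := fun n m hnm =>
    le_iInf₂ fun i hi => iInf₂_le i (hnm.trans hi)
  rw [ENNReal.iSup_add_iSup_of_monotone hmu hmv]
  exact iSup_mono fun n => le_iInf₂ fun i hi =>
    add_le_add (iInf₂_le i hi) (iInf₂_le i hi)

lemma mySum_liminf_le {ι : Type*} (s : Finset ι) (f : ι → ℕ → ℝ≥0∞) :
    ∑ i ∈ s, Filter.liminf (f i) atTop ≤ Filter.liminf (fun n => ∑ i ∈ s, f i n) atTop := by
  classical
  induction s using Finset.induction_on with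
  | empty => simp
  | insert a s hnotmem ih =>
      simp only [Finset.sum_insert hnotmem]
      calc Filter.liminf (f a) atTop + ∑ i ∈ s, Filter.liminf (f i) atTop
          ≤ Filter.liminf (f a) atTop + Filter.liminf (fun n => ∑ i ∈ s, f i n) atTop :=
            add_le_add le_rfl ih
        _ ≤ Filter.liminf (fun n => f a n + ∑ i ∈ s, f i n) atTop := myLe_liminf_add _ _

lemma myAux_sq {H : Type*} [NormedAddCommGroup H] [InnerProductSpace ℝ H] (v w : H) :
    ‖w‖ ^ 2 + 2 * ⟪v - w, w⟫ ≤ ‖v‖ ^ 2 := by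
  have h1 : ‖v - w‖ ^ 2 = ‖v‖ ^ 2 - 2 * ⟪v, w⟫ + ‖w‖ ^ 2 := norm_sub_sq_real v w
  have h2 : ⟪v - w, w⟫ = ⟪v, w⟫ - ⟪w, w⟫ := inner_sub_left _ _ _
  have h3 : ⟪w, w⟫ = ‖w‖ ^ 2 := real_inner_self_eq_norm_sq w
  nlinarith [sq_nonneg ‖v - w‖]

end Aux

variable {Y U Util Ytil Z : Type*}
  [NormedAddCommGroup Y] [NormedSpace ℝ Y] [CompleteSpace Y]
  [NormedAddCommGroup U] [NormedSpace ℝ U] [CompleteSpace U]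
  [NormedAddCommGroup Util] [InnerProductSpace ℝ Util] [CompleteSpace Util]
  [NormedAddCommGroup Ytil] [InnerProductSpace ℝ Ytil] [CompleteSpace Ytil]
  [NormedAddCommGroup Z] [NormedSpace ℝ Z] [CompleteSpace Z]

/-- Convergence of optimal values (Step 2 in the proof of Lemma 3.1): under (H1)–(H6),
if `(αⁿ, yδⁿ) → (α, yδ)`, each `(yⁿ,uⁿ)` solves `(P_{αⁿ,yδⁿ})`, and `(yⁿ,uⁿ)` converges
weakly to some `p ∈ F_ad`, then `p` solves `(P_{α,yδ})` and
`J_{αⁿ,yδⁿ}(yⁿ,uⁿ) → J_{α,yδ}(p) = min J_{α,yδ} < ∞`. -/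
theorem convergence_of_optimal_values
    (hYrefl : Function.Surjective (NormedSpace.inclusionInDoubleDual ℝ Y))
    (hUrefl : Function.Surjective (NormedSpace.inclusionInDoubleDual ℝ U))
    {m r : ℕ} (hm : 0 < m) (hr : 0 < r)
    (ιY : Y →L[ℝ] Ytil) (hιY : Function.Injective ιY)
    (Uad : Set U) (e : Y → U → Z) (Ψ : Fin r → U → ℝ≥0∞)
    (αlo αhi : Fin r → ℝ) (hαpos : ∀ i, 0 < αlo i) (hαle : ∀ i, αlo i ≤ αhi i)
    (hH1 : Convex ℝ Uad ∧ IsClosed Uad)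
    (hH2 : (Fad Uad e).Nonempty)
    (hH3 : ∀ (y : ℕ → Y) (u : ℕ → U) (ybar : Y) (ubar : U),
      (∀ n, u n ∈ Uad) → ubar ∈ Uad → (∀ n, e (y n) (u n) = 0) →
      WeakConv (fun n => (y n, u n)) (ybar, ubar) → e ybar ubar = 0)
    (hH4 : ∀ (y : ℕ → Y) (u : ℕ → U), (∀ n, (y n, u n) ∈ Fad Uad e) →
      (∃ C : ℝ, ∀ n, ‖u n‖ ≤ C) → ∃ C : ℝ, ∀ n, ‖y n‖ ≤ C)
    (hH5coer : ∀ u : ℕ → U, Tendsto (fun n => ‖u n‖) atTop atTop →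
      Tendsto (fun n => ∑ i, Ψ i (u n)) atTop (𝓝 (⊤ : ℝ≥0∞)))
    (hH5prop : ∃ p ∈ Fad Uad e, ∑ i, Ψ i p.2 ≠ ⊤)
    (hH6 : ∀ (i : Fin r) (u : ℕ → U) (ubar : U), WeakConv u ubar →
      Ψ i ubar ≤ Filter.liminf (fun n => Ψ i (u n)) atTop)
    (αseq : ℕ → Fin r → ℝ) (hαseq : ∀ n i, αlo i ≤ αseq n i ∧ αseq n i ≤ αhi i)
    (α : Fin r → ℝ) (hα : ∀ i, αlo i ≤ α i ∧ α i ≤ αhi i)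
    (hαconv : ∀ i, Tendsto (fun n => αseq n i) atTop (𝓝 (α i)))
    (yδseq : ℕ → Fin m → Ytil) (yδ : Fin m → Ytil)
    (hyδconv : ∀ j, Tendsto (fun n => yδseq n j) atTop (𝓝 (yδ j)))
    (y : ℕ → Y) (u : ℕ → U)
    (hsol : ∀ n, Solves Uad e ιY Ψ (αseq n) (yδseq n) (y n, u n))
    (p : Y × U) (hpFad : p ∈ Fad Uad e)
    (hweak : WeakConv (fun n => (y n, u n)) p) :
    Solves Uad e ιY Ψ α yδ p ∧
      Tendsto (fun n => Jfun ιY Ψ (αseq n) (yδseq n) (y n, u n)) atTop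
        (𝓝 (Jfun ιY Ψ α yδ p)) ∧
      Jfun ιY Ψ α yδ p ≠ ⊤ := by
  classical
  have hm' : (m : ℝ) ≠ 0 := Nat.cast_ne_zero.2 hm.ne'
  -- componentwise weak convergence
  have hweakU : WeakConv u p.2 := by
    intro f
    have := hweak (f.comp (ContinuousLinearMap.snd ℝ Y U))
    simpa using this
  have hweakY : ∀ f : Ytil →L[ℝ] ℝ,
      Tendsto (fun n => f (ιY (y n))) atTop (𝓝 (f (ιY p.1))) := by
    intro f
    have := hweak ((f.comp ιY).comp (ContinuousLinearMap.fst ℝ Y U))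
    simpa using this
  set c : ℝ := 1 / (2 * (m : ℝ)) with hcdef
  have hc : 0 < c := by positivity
  set A : (Fin m → Ytil) → Y → ℝ := fun d z => c * ∑ j, ‖ιY z - d j‖ ^ 2 with hA
  have hJ : ∀ (β : Fin r → ℝ) (d : Fin m → Ytil) (q : Y × U),
      Jfun ιY Ψ β d q
        = ENNReal.ofReal (A d q.1) + ∑ i, ENNReal.ofReal (β i) * Ψ i q.2 :=
    fun _ _ _ => rfl
  -- convergence of J along the data for a fixed point q
  have hJq : ∀ q : Y × U, Tendsto (fun n => Jfun ιY Ψ (αseq n) (yδseq n) q) atTop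
      (𝓝 (Jfun ιY Ψ α yδ q)) := by
    intro q
    have h1 : Tendsto (fun n => ENNReal.ofReal (A (yδseq n) q.1)) atTop
        (𝓝 (ENNReal.ofReal (A yδ q.1))) := by
      apply ENNReal.tendsto_ofReal
      apply Filter.Tendsto.const_mul
      apply tendsto_finset_sum
      intro j _
      exact ((tendsto_const_nhds.sub (hyδconv j)).norm).pow 2
    have h2 : ∀ i : Fin r, Tendsto (fun n => ENNReal.ofReal (αseq n i) * Ψ i q.2) atTop
        (𝓝 (ENNReal.ofReal (α i) * Ψ i q.2)) := by
      intro i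
      by_cases hT : Ψ i q.2 = ⊤
      · rw [hT]
        have hne : ∀ n, ENNReal.ofReal (αseq n i) ≠ 0 := fun n =>
          (ENNReal.ofReal_pos.2 ((hαpos i).trans_le (hαseq n i).1)).ne'
        have hne' : ENNReal.ofReal (α i) ≠ 0 :=
          (ENNReal.ofReal_pos.2 ((hαpos i).trans_le (hα i).1)).ne'
        simp only [ENNReal.mul_top (hne _), ENNReal.mul_top hne']
        exact tendsto_const_nhds
      · exact ENNReal.Tendsto.mul_const (ENNReal.tendsto_ofReal (hαconv i)) (Or.inr hT)
    have := h1.add (tendsto_finset_sum Finset.univ (fun i _ => h2 i))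
    simpa only [hJ] using this
  -- upper bound via optimality
  have hupper : ∀ q ∈ Fad Uad e,
      limsup (fun n => Jfun ιY Ψ (αseq n) (yδseq n) (y n, u n)) atTop ≤ Jfun ιY Ψ α yδ q := by
    intro q hq
    have hle : ∀ n, Jfun ιY Ψ (αseq n) (yδseq n) (y n, u n)
        ≤ Jfun ιY Ψ (αseq n) (yδseq n) q := fun n => (hsol n).2 q hq
    calc limsup (fun n => Jfun ιY Ψ (αseq n) (yδseq n) (y n, u n)) atTop
        ≤ limsup (fun n => Jfun ιY Ψ (αseq n) (yδseq n) q) atTop :=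
          limsup_le_limsup (Eventually.of_forall hle)
      _ = Jfun ιY Ψ α yδ q := (hJq q).limsup_eq
  -- lower bound on the fidelity term
  set w : Fin m → Ytil := fun j => ιY p.1 - yδ j with hw
  set S : ℕ → ℝ := fun n => ∑ j, ⟪ιY (y n) - yδseq n j - w j, w j⟫ with hS
  have hKey : ∀ n, A yδ p.1 + (1 / (m : ℝ)) * S n ≤ A (yδseq n) (y n) := by
    intro n
    have hj : ∀ j : Fin m, ‖w j‖ ^ 2 + 2 * ⟪ιY (y n) - yδseq n j - w j, w j⟫
        ≤ ‖ιY (y n) - yδseq n j‖ ^ 2 := fun j => myAux_sq _ _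
    have hsum : ∑ j, ‖w j‖ ^ 2 + 2 * S n ≤ ∑ j, ‖ιY (y n) - yδseq n j‖ ^ 2 := by
      rw [hS, Finset.mul_sum, ← Finset.sum_add_distrib]
      exact Finset.sum_le_sum fun j _ => hj j
    have hmul := mul_le_mul_of_nonneg_left hsum hc.le
    have hid : A yδ p.1 + (1 / (m : ℝ)) * S n = c * (∑ j, ‖w j‖ ^ 2 + 2 * S n) := by
      simp only [hA, hw, hcdef]
      field_simp
    rw [hid, hA]
    exact hmul
  -- the correction term tends to 0
  have hS0 : Tendsto (fun n => (1 / (m : ℝ)) * S n) atTop (𝓝 0) := by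
    have hterm : ∀ j : Fin m,
        Tendsto (fun n => ⟪ιY (y n) - yδseq n j - w j, w j⟫) atTop (𝓝 0) := by
      intro j
      have h1 : Tendsto (fun n => ⟪ιY (y n), w j⟫) atTop (𝓝 ⟪ιY p.1, w j⟫) := by
        have := hweakY (innerSL ℝ (w j))
        simpa [real_inner_comm] using this
      have h2 : Tendsto (fun n => ⟪yδseq n j, w j⟫) atTop (𝓝 ⟪yδ j, w j⟫) :=
        (hyδconv j).inner tendsto_const_nhds
      have h3 := (h1.sub h2).sub (tendsto_const_nhds (x := ⟪w j, w j⟫))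
      have heq : (fun n => ⟪ιY (y n), w j⟫ - ⟪yδseq n j, w j⟫ - ⟪w j, w j⟫)
          = fun n => ⟪ιY (y n) - yδseq n j - w j, w j⟫ := by
        funext n
        simp only [inner_sub_left]
      have hlim0 : ⟪ιY p.1, w j⟫ - ⟪yδ j, w j⟫ - ⟪w j, w j⟫ = 0 := by
        rw [← inner_sub_left, ← inner_sub_left]
        simp [hw]
      rw [heq, hlim0] at h3
      exact h3
    have hsum := tendsto_finset_sum (Finset.univ : Finset (Fin m)) (fun j _ => hterm j)
    have := hsum.const_mul (1 / (m : ℝ))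
    simpa [hS] using this
  -- liminf lower bound for the fidelity part
  have hAlb : ENNReal.ofReal (A yδ p.1)
      ≤ liminf (fun n => ENNReal.ofReal (A (yδseq n) (y n))) atTop := by
    have h1 : Tendsto (fun n => ENNReal.ofReal (A yδ p.1 + (1 / (m : ℝ)) * S n)) atTop
        (𝓝 (ENNReal.ofReal (A yδ p.1))) := by
      have := ENNReal.tendsto_ofReal ((tendsto_const_nhds (x := A yδ p.1)).add hS0)
      simpa using this
    calc ENNReal.ofReal (A yδ p.1)
        = liminf (fun n => ENNReal.ofReal (A yδ p.1 + (1 / (m : ℝ)) * S n)) atTop :=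
          h1.liminf_eq.symm
      _ ≤ liminf (fun n => ENNReal.ofReal (A (yδseq n) (y n))) atTop :=
          liminf_le_liminf (Eventually.of_forall fun n => ENNReal.ofReal_le_ofReal (hKey n))
  -- liminf lower bound for the regularization parts
  have hBlb : ∀ i : Fin r, ENNReal.ofReal (α i) * Ψ i p.2
      ≤ liminf (fun n => ENNReal.ofReal (αseq n i) * Ψ i (u n)) atTop := by
    intro i
    have h1 : liminf (fun n => ENNReal.ofReal (αseq n i)) atTop = ENNReal.ofReal (α i) :=
      (ENNReal.tendsto_ofReal (hαconv i)).liminf_eq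
    calc ENNReal.ofReal (α i) * Ψ i p.2
        ≤ ENNReal.ofReal (α i) * liminf (fun n => Ψ i (u n)) atTop :=
          mul_le_mul' le_rfl (hH6 i u p.2 hweakU)
      _ = liminf (fun n => ENNReal.ofReal (αseq n i)) atTop
            * liminf (fun n => Ψ i (u n)) atTop := by rw [h1]
      _ ≤ liminf ((fun n => ENNReal.ofReal (αseq n i)) * fun n => Ψ i (u n)) atTop :=
          ENNReal.le_liminf_mul
      _ = liminf (fun n => ENNReal.ofReal (αseq n i) * Ψ i (u n)) atTop := rfl
  -- overall lower bound
  have hlower : Jfun ιY Ψ α yδ p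
      ≤ liminf (fun n => Jfun ιY Ψ (αseq n) (yδseq n) (y n, u n)) atTop := by
    calc Jfun ιY Ψ α yδ p
        = ENNReal.ofReal (A yδ p.1) + ∑ i, ENNReal.ofReal (α i) * Ψ i p.2 := hJ α yδ p
      _ ≤ liminf (fun n => ENNReal.ofReal (A (yδseq n) (y n))) atTop
            + ∑ i, liminf (fun n => ENNReal.ofReal (αseq n i) * Ψ i (u n)) atTop :=
          add_le_add hAlb (Finset.sum_le_sum fun i _ => hBlb i)
      _ ≤ liminf (fun n => ENNReal.ofReal (A (yδseq n) (y n))) atTop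
            + liminf (fun n => ∑ i, ENNReal.ofReal (αseq n i) * Ψ i (u n)) atTop :=
          add_le_add le_rfl (mySum_liminf_le _ _)
      _ ≤ liminf (fun n => ENNReal.ofReal (A (yδseq n) (y n))
            + ∑ i, ENNReal.ofReal (αseq n i) * Ψ i (u n)) atTop := myLe_liminf_add _ _
      _ = liminf (fun n => Jfun ιY Ψ (αseq n) (yδseq n) (y n, u n)) atTop := by
          simp only [hJ]
  -- p is a minimizer
  have hls : liminf (fun n => Jfun ιY Ψ (αseq n) (yδseq n) (y n, u n)) atTop
      ≤ limsup (fun n => Jfun ιY Ψ (αseq n) (yδseq n) (y n, u n)) atTop := liminf_le_limsup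
  have hmin : ∀ q ∈ Fad Uad e, Jfun ιY Ψ α yδ p ≤ Jfun ιY Ψ α yδ q := fun q hq =>
    hlower.trans (hls.trans (hupper q hq))
  -- finiteness
  obtain ⟨q₀, hq₀, hq₀fin⟩ := hH5prop
  have hfin : Jfun ιY Ψ α yδ q₀ ≠ ⊤ := by
    rw [hJ]
    refine ENNReal.add_ne_top.2 ⟨ENNReal.ofReal_ne_top, ?_⟩
    refine (ENNReal.sum_lt_top.2 fun i _ => ?_).ne
    refine ENNReal.mul_lt_top ENNReal.ofReal_lt_top ?_
    exact lt_of_le_of_lt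
      (Finset.single_le_sum (f := fun i => Ψ i q₀.2) (fun i _ => zero_le) (Finset.mem_univ i))
      (lt_top_iff_ne_top.2 hq₀fin)
  have hpfin : Jfun ιY Ψ α yδ p ≠ ⊤ := ne_top_of_le_ne_top hfin (hmin q₀ hq₀)
  have htend : Tendsto (fun n => Jfun ιY Ψ (αseq n) (yδseq n) (y n, u n)) atTop
      (𝓝 (Jfun ιY Ψ α yδ p)) :=
    tendsto_of_le_liminf_of_limsup_le hlower (hupper p hpFad)
  exact ⟨⟨hpFad, hmin⟩, htend, hpfin⟩
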